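/- For every z > 0, the function γ ↦ m(−z; γ) is strictly increasing on (0, ∞): if 0 < γ₁ < γ₂ then m(−z; γ₁) < m(−z; γ₂). -/

import Mathlib

set_option maxHeartbeats 1000000 in
theorem stmt13 (z : ℝ) (hz : 0 < z) (γ₁ γ₂ : ℝ) (h1 : 0 < γ₁) (h12 : γ₁ < γ₂) :
    (-(1 - γ₁ + z) + Real.sqrt ((1 - γ₁ + z) ^ 2 + 4 * γ₁ * z)) / (2 * γ₁ * z) <
    (-(1 - γ₂ + z) + Real.sqrt ((1 - γ₂ + z) ^ 2 + 4 * γ₂ * z)) / (2 * γ₂ * z) := by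
  have h2 : 0 < γ₂ := h1.trans h12
  set A₁ := 1 - γ₁ + z with hA1
  set A₂ := 1 - γ₂ + z with hA2
  have hnn1 : 0 ≤ A₁ ^ 2 + 4 * γ₁ * z := by nlinarith [sq_nonneg (γ₁ + z - 1)]
  have hnn2 : 0 ≤ A₂ ^ 2 + 4 * γ₂ * z := by nlinarith [sq_nonneg (γ₂ + z - 1)]
  set S₁ := Real.sqrt (A₁ ^ 2 + 4 * γ₁ * z) with hS1
  set S₂ := Real.sqrt (A₂ ^ 2 + 4 * γ₂ * z) with hS2
  have hS1sq : S₁ ^ 2 = A₁ ^ 2 + 4 * γ₁ * z := Real.sq_sqrt hnn1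
  have hS2sq : S₂ ^ 2 = A₂ ^ 2 + 4 * γ₂ * z := Real.sq_sqrt hnn2
  have hS1nn : 0 ≤ S₁ := Real.sqrt_nonneg _
  have hS2nn : 0 ≤ S₂ := Real.sqrt_nonneg _
  -- S_i > γ_i + z - 1
  have hS1gt : γ₁ + z - 1 < S₁ := by
    nlinarith [sq_nonneg (S₁ - (γ₁ + z - 1)), sq_nonneg (S₁ + (γ₁ + z - 1))]
  have hS2gt : γ₂ + z - 1 < S₂ := by
    nlinarith [sq_nonneg (S₂ - (γ₂ + z - 1)), sq_nonneg (S₂ + (γ₂ + z - 1))]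
  have hpos1 : 0 < A₁ + S₁ := by simp only [hA1]; linarith
  have hpos2 : 0 < A₂ + S₂ := by simp only [hA2]; linarith
  have hm1 : (-A₁ + S₁) / (2 * γ₁ * z) = 2 / (A₁ + S₁) := by
    rw [div_eq_div_iff (by positivity : (0:ℝ) < 2 * γ₁ * z).ne' hpos1.ne']; nlinarith [hS1sq]
  have hm2 : (-A₂ + S₂) / (2 * γ₂ * z) = 2 / (A₂ + S₂) := by
    rw [div_eq_div_iff (by positivity : (0:ℝ) < 2 * γ₂ * z).ne' hpos2.ne']; nlinarith [hS2sq]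
  rw [hm1, hm2]
  apply div_lt_div_of_pos_left (by norm_num) hpos2
  -- need A₂ + S₂ < A₁ + S₁, i.e. S₂ - S₁ < γ₂ - γ₁
  have hS1pos : 0 < S₁ := by nlinarith [hS1sq, sq_nonneg A₁, mul_pos h1 hz]
  have hS2pos : 0 < S₂ := by nlinarith [hS2sq, sq_nonneg A₂, mul_pos h2 hz]
  have hsum : 0 < S₁ + S₂ := by linarith
  have h3 : (S₂ - S₁) * (S₁ + S₂) < (γ₂ - γ₁) * (S₁ + S₂) := by
    nlinarith [mul_pos (sub_pos.2 h12)
      (show 0 < S₁ + S₂ - (γ₁ + γ₂ + 2 * z - 2) by linarith)]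
  have h4 : S₂ - S₁ < γ₂ - γ₁ := (mul_lt_mul_iff_of_pos_right hsum).mp h3
  simp only [hA1, hA2]; linarith
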